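/- If T is a VOA(M, v) for a matroid M = (N, r) and S ⊆ N, and a is any row appearing in the subarray T(S), then the array T|_{S:a}, whose rows are the restrictions to N \ S of those rows c of T with c(S) = a, is a VOA(M/S, v), where M/S is the contraction of S from M with rank function r'(A) = r(A∪S) − r(S). -/
import Mathlib


/-- Contraction of a VOA: if `T` is a `VOA(M, v)`, `S ⊆ N` and `a` is the
row `T i₀` restricted to `S`, then the array whose rows are the restrictions
to `N \ S` of those rows `c` of `T` with `c(S) = a` is a `VOA(M/S, v)`,
where `M/S` has rank function `r'(A) = r(A ∪ S) - r(S)`. -/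
theorem voa_contraction {α : Type*} [DecidableEq α]
    (N : Finset α) (r : Finset α → ℤ)
    (h1 : ∀ A ⊆ N, 0 ≤ r A ∧ r A ≤ A.card)
    (h2 : ∀ A B : Finset α, A ⊆ B → B ⊆ N → r A ≤ r B)
    (h3 : ∀ A B : Finset α, A ⊆ N → B ⊆ N →
      r (A ∪ B) + r (A ∩ B) ≤ r A + r B)
    (v : ℕ) (hv : 2 ≤ v)
    (T : Fin (v ^ (r N).toNat) → α → Fin v)
    (hT : ∀ A ⊆ N, ∀ i,
      (Finset.univ.filter (fun j => ∀ a ∈ A, T j a = T i a)).card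
        = v ^ (r N - r A).toNat)
    (S : Finset α) (hS : S ⊆ N)
    (i₀ : Fin (v ^ (r N).toNat)) :
    -- the contracted array has v^{r'(N')} rows
    (Finset.univ.filter (fun j => ∀ s ∈ S, T j s = T i₀ s)).card
        = v ^ (r ((N \ S) ∪ S) - r S).toNat ∧
    -- and it satisfies the VOA condition for the contraction M/S
    (∀ A ⊆ N \ S, ∀ i, (∀ s ∈ S, T i s = T i₀ s) →
      (Finset.univ.filter (fun j =>
          (∀ s ∈ S, T j s = T i₀ s) ∧ ∀ a ∈ A, T j a = T i a)).card
        = v ^ ((r ((N \ S) ∪ S) - r S) - (r (A ∪ S) - r S)).toNat) := by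
  have hNS : (N \ S) ∪ S = N := Finset.sdiff_union_of_subset hS
  rw [hNS]
  constructor
  · exact hT S hS i₀
  · intro A hA i hi
    have hAS : A ∪ S ⊆ N := Finset.union_subset (hA.trans (Finset.sdiff_subset)) hS
    have key := hT (A ∪ S) hAS i
    have hset : (Finset.univ.filter (fun j =>
          (∀ s ∈ S, T j s = T i₀ s) ∧ ∀ a ∈ A, T j a = T i a))
        = (Finset.univ.filter (fun j => ∀ a ∈ A ∪ S, T j a = T i a)) := by
      apply Finset.filter_congr
      intro j _
      constructor
      · rintro ⟨hjS, hjA⟩ a ha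
        rcases Finset.mem_union.mp ha with h | h
        · exact hjA a h
        · rw [hjS a h, hi a h]
      · intro h
        refine ⟨fun s hs => ?_, fun a ha => h a (Finset.mem_union_left _ ha)⟩
        rw [h s (Finset.mem_union_right _ hs), hi s hs]
    rw [hset, key]
    congr 1
    omega
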